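/- Let Λ be a discrete group having property RD with respect to a length function L. Then every subgroup H ≤ Λ has property RD with respect to the restricted length function L|_H: there is a polynomial P with real coefficients such that for every finitely supported f : H → ℂ, the operator norm of the convolution operator ξ ↦ f*ξ on ℓ²(H) is at most P(L(f))·‖f‖₂. -/

import Mathlib

namespace Stmt19

variable {G : Type*} [Group G]

/-- Convolution of a finitely supported function with an arbitrary function. -/
noncomputable def conv (f : G →₀ ℂ) (ξ : G → ℂ) : G → ℂ :=
  fun g => ∑ h ∈ f.support, f h * ξ (h⁻¹ * g)

/-- The operator norm of the convolution operator `ξ ↦ f * ξ` on `ℓ²(G)` is at most `C`. -/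
noncomputable def ConvOpNormLE (f : G →₀ ℂ) (C : ℝ) : Prop :=
  ∀ ξ : lp (fun _ : G => ℂ) 2, ∃ hmem : Memℓp (conv f (ξ : ∀ _ : G, ℂ)) 2,
    ‖(⟨conv f (ξ : ∀ _ : G, ℂ), hmem⟩ : lp (fun _ : G => ℂ) 2)‖ ≤ C * ‖ξ‖

/-- The ℓ²-norm of a finitely supported function. -/
noncomputable def l2norm (f : G →₀ ℂ) : ℝ :=
  Real.sqrt (∑ g ∈ f.support, ‖f g‖ ^ 2)

/-- `L(f) = max {L g : f g ≠ 0}`. -/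
noncomputable def lenOf (L : G → ℝ) (f : G →₀ ℂ) : ℝ :=
  sSup (L '' {g | f g ≠ 0})

def IsLengthFun (L : G → ℝ) : Prop :=
  L 1 = 0 ∧ (∀ g, 0 ≤ L g) ∧ (∀ g, L g⁻¹ = L g) ∧ ∀ g h, L (g * h) ≤ L g + L h

/-- Property RD with respect to `L`. -/
def HasRD (L : G → ℝ) : Prop :=
  ∃ P : Polynomial ℝ, ∀ f : G →₀ ℂ,
    ConvOpNormLE f (P.eval (lenOf L f) * l2norm f)

end Stmt19

section Aux

/-- Transfer of summability and tsum from a subset to the whole type for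
functions vanishing outside the subset. -/
lemma aux_indicator_eq {Λ : Type*} (S : Set Λ) (u : Λ → ℝ)
    (h0 : ∀ g ∉ S, u g = 0) : S.indicator u = u :=
  Set.indicator_eq_self.2 fun g hg => by
    by_contra hgS; exact hg (h0 g hgS)

lemma aux_summable_subtype {Λ : Type*} (S : Set Λ) (u : Λ → ℝ)
    (h0 : ∀ g ∉ S, u g = 0) : Summable (fun x : S => u x) ↔ Summable u := by
  rw [show (fun x : S => u x) = u ∘ Subtype.val from rfl,
    summable_subtype_iff_indicator, aux_indicator_eq S u h0]

lemma aux_tsum_subtype {Λ : Type*} (S : Set Λ) (u : Λ → ℝ)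
    (h0 : ∀ g ∉ S, u g = 0) : ∑' x : S, u x = ∑' g, u g := by
  rw [tsum_subtype S u, aux_indicator_eq S u h0]

end Aux

/-- **RD is inherited by subgroups.** If a discrete group `Λ` has property RD
with respect to a length function `L`, then every subgroup `H ≤ Λ` has property
RD with respect to the restricted length function `L|_H`. -/
theorem statement19
    {Λ : Type*} [Group Λ] (L : Λ → ℝ) (hlen : Stmt19.IsLengthFun L)
    (hRD : Stmt19.HasRD L) (H : Subgroup Λ) :
    Stmt19.HasRD (fun h : H => L (h : Λ)) := by
  classical
  obtain ⟨P, hP⟩ := hRD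
  refine ⟨P, fun f => ?_⟩
  have hp : (0:ℝ) < (2:ENNReal).toReal := by norm_num
  set e : H ↪ Λ := ⟨Subtype.val, Subtype.val_injective⟩ with he
  set f' : Λ →₀ ℂ := Finsupp.embDomain e f with hf'
  -- basic facts about f'
  have hf'app : ∀ h : H, f' (h : Λ) = f h := fun h => Finsupp.embDomain_apply_self e f h
  have hf'zero : ∀ g : Λ, g ∉ H → f' g = 0 := by
    intro g hg
    apply Finsupp.embDomain_notin_range
    rintro ⟨h, rfl⟩
    exact hg h.2
  -- length equality
  have hlenEq : Stmt19.lenOf (fun h : H => L (h : Λ)) f = Stmt19.lenOf L f' := by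
    unfold Stmt19.lenOf
    congr 1
    ext x
    constructor
    · rintro ⟨h, hh, rfl⟩
      exact ⟨(h : Λ), by simpa [hf'app] using hh, rfl⟩
    · rintro ⟨g, hg, rfl⟩
      by_cases hgH : g ∈ H
      · exact ⟨⟨g, hgH⟩, by simpa using (hf'app ⟨g, hgH⟩ ▸ hg), rfl⟩
      · exact absurd (hf'zero g hgH) hg
  -- l2 norm equality
  have hl2Eq : Stmt19.l2norm f = Stmt19.l2norm f' := by
    unfold Stmt19.l2norm
    congr 1
    rw [hf', Finsupp.support_embDomain, Finset.sum_map]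
    exact Finset.sum_congr rfl fun h _ => by rw [Finsupp.embDomain_apply_self]
  intro ξ
  -- extend ξ by zero
  set ζ : Λ → ℂ := fun g => if hg : g ∈ H then (ξ : ∀ _ : H, ℂ) ⟨g, hg⟩ else 0 with hζ
  have hζcoe : ∀ h : H, ζ (h : Λ) = (ξ : ∀ _ : H, ℂ) h := fun h => dif_pos h.2
  have hζ0 : ∀ g : Λ, g ∉ H → ζ g = 0 := fun g hg => dif_neg hg
  have hζmem : Memℓp ζ 2 := by
    apply memℓp_gen
    rw [← aux_summable_subtype (H : Set Λ) _
      (fun g hg => by simp only [hζ0 g hg, norm_zero, Real.zero_rpow hp.ne'])]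
    have := (memℓp_gen_iff hp).1 (lp.memℓp ξ)
    exact this.congr fun h => by rw [hζcoe h]
  set ζlp : lp (fun _ : Λ => ℂ) 2 := ⟨ζ, hζmem⟩ with hζlp
  have hζnorm : ‖ζlp‖ = ‖ξ‖ := by
    rw [lp.norm_eq_tsum_rpow hp, lp.norm_eq_tsum_rpow hp]
    congr 1
    rw [← aux_tsum_subtype (H : Set Λ) (fun g => ‖ζ g‖ ^ (2:ENNReal).toReal)
      (fun g hg => by simp only [hζ0 g hg, norm_zero, Real.zero_rpow hp.ne'])]
    exact tsum_congr fun h => by rw [hζcoe h]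
  obtain ⟨hmem', hbound⟩ := hP f' ζlp
  -- the convolution over Λ vanishes off H and restricts to the convolution over H
  have hconvcoe : ∀ h : H,
      Stmt19.conv f' (ζlp : ∀ _ : Λ, ℂ) (h : Λ) = Stmt19.conv f (ξ : ∀ _ : H, ℂ) h := by
    intro h
    unfold Stmt19.conv
    rw [hf', Finsupp.support_embDomain, Finset.sum_map]
    refine Finset.sum_congr rfl fun k _ => ?_
    have : (e k)⁻¹ * (h : Λ) = ((k⁻¹ * h : H) : Λ) := by simp [he]
    rw [Finsupp.embDomain_apply_self, show ((ζlp : ∀ _ : Λ, ℂ) = ζ) from rfl, this, hζcoe]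
  have hconv0 : ∀ g : Λ, g ∉ H → Stmt19.conv f' (ζlp : ∀ _ : Λ, ℂ) g = 0 := by
    intro g hg
    unfold Stmt19.conv
    rw [hf', Finsupp.support_embDomain, Finset.sum_map]
    refine Finset.sum_eq_zero fun k _ => ?_
    have : (e k)⁻¹ * g ∉ H := by
      intro hmem
      have h2 : (↑k : Λ) * ((↑k : Λ)⁻¹ * g) ∈ H := H.mul_mem k.2 hmem
      rw [mul_inv_cancel_left] at h2
      exact hg h2
    rw [show ((ζlp : ∀ _ : Λ, ℂ) = ζ) from rfl, hζ0 _ this, mul_zero]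
  -- membership
  have hmem : Memℓp (Stmt19.conv f (ξ : ∀ _ : H, ℂ)) 2 := by
    apply memℓp_gen
    have hsum := (memℓp_gen_iff hp).1 hmem'
    have := (aux_summable_subtype (H : Set Λ)
      (fun g => ‖Stmt19.conv f' (ζlp : ∀ _ : Λ, ℂ) g‖ ^ (2:ENNReal).toReal)
      (fun g hg => by simp only [hconv0 g hg, norm_zero, Real.zero_rpow hp.ne'])).2 hsum
    exact this.congr fun h => by rw [hconvcoe h]
  refine ⟨hmem, ?_⟩
  have hnormEq :
      ‖(⟨Stmt19.conv f (ξ : ∀ _ : H, ℂ), hmem⟩ : lp (fun _ : H => ℂ) 2)‖ =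
      ‖(⟨Stmt19.conv f' (ζlp : ∀ _ : Λ, ℂ), hmem'⟩ : lp (fun _ : Λ => ℂ) 2)‖ := by
    rw [lp.norm_eq_tsum_rpow hp, lp.norm_eq_tsum_rpow hp]
    congr 1
    rw [← aux_tsum_subtype (H : Set Λ)
      (fun g => ‖Stmt19.conv f' (ζlp : ∀ _ : Λ, ℂ) g‖ ^ (2:ENNReal).toReal)
      (fun g hg => by simp only [hconv0 g hg, norm_zero, Real.zero_rpow hp.ne'])]
    exact tsum_congr fun h => by rw [hconvcoe h]
  calc ‖(⟨Stmt19.conv f (ξ : ∀ _ : H, ℂ), hmem⟩ : lp (fun _ : H => ℂ) 2)‖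
      = ‖(⟨Stmt19.conv f' (ζlp : ∀ _ : Λ, ℂ), hmem'⟩ : lp (fun _ : Λ => ℂ) 2)‖ := hnormEq
    _ ≤ P.eval (Stmt19.lenOf L f') * Stmt19.l2norm f' * ‖ζlp‖ := hbound
    _ = P.eval (Stmt19.lenOf (fun h : H => L (h : Λ)) f) * Stmt19.l2norm f * ‖ξ‖ := by
        rw [hlenEq, hl2Eq, hζnorm]
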